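/- Let X be an alphabet having n letters and let g: X* → X* be a morphism. If g is growing and loop-free, then PER(g^d(x)) ≥ (1/(2·M_g^n))·|g^d(x)| whenever x ∈ X is a letter and d is a positive integer. -/

import Mathlib

open Filter Set

variable {X : Type*}

/-- Apply the morphism with letter images `g` to a word. -/
def applyM (g : X → List X) (w : List X) : List X := w.flatMap g

/-- `iterM g k w` is `g^k(w)`. -/
def iterM (g : X → List X) (k : ℕ) (w : List X) : List X := (applyM g)^[k] w

/-- The letter map of the composition `g ∘ h` (first `h`, then `g`). -/
def compM (g h : X → List X) : X → List X := fun a => applyM g (h a)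

/-- The letter map of the power `g^k`. -/
def powM (g : X → List X) (k : ℕ) : X → List X := fun a => iterM g k [a]

/-- A morphism is primitive if some power maps every letter to a word containing every letter. -/
def Primitive (g : X → List X) : Prop := ∃ k : ℕ, 0 < k ∧ ∀ a b : X, a ∈ iterM g k [b]

/-- `Mg g` is the maximal length of the image of a letter. -/
def Mg [Fintype X] (g : X → List X) : ℕ := Finset.univ.sup fun x => (g x).length

/-- A morphism is growing if the lengths of iterated images of every letter tend to infinity. -/
def Growing (g : X → List X) : Prop :=
  ∀ x : X, Tendsto (fun i => (iterM g i [x]).length) atTop atTop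

/-- `w` is a (finite) prefix of the infinite word `s`. -/
def IsPrefI (w : List X) (s : ℕ → X) : Prop := ∀ i (h : i < w.length), w[i]'h = s i

/-- `v` is a factor of the infinite word `s`. -/
def IsFactorI (v : List X) (s : ℕ → X) : Prop :=
  ∃ j : ℕ, ∀ i (h : i < v.length), v[i]'h = s (j + i)

/-- `g^ω(x)` exists. -/
def OmegaExists (g : X → List X) (x : X) : Prop :=
  [x] <+: g x ∧ Tendsto (fun i => (iterM g i [x]).length) atTop atTop

/-- `s = g^ω(x)`. -/
def IsOmega (g : X → List X) (x : X) (s : ℕ → X) : Prop :=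
  OmegaExists g x ∧ ∀ i : ℕ, IsPrefI (iterM g i [x]) s

/-- `s = u^ω` for the nonempty word `u`. -/
def IsPeriodicWord (s : ℕ → X) (u : List X) : Prop :=
  u ≠ [] ∧ ∀ (i : ℕ) (h : i % u.length < u.length), s i = u[i % u.length]'h

/-- A morphism is looping. -/
def Looping (g : X → List X) : Prop :=
  ∃ k : ℕ, 0 < k ∧ ∃ x : X, ∃ u : List X, ∃ s : ℕ → X,
    IsOmega (powM g k) x s ∧ IsPeriodicWord s u

/-- A morphism is loop-free if it is not looping. -/
def LoopFree (g : X → List X) : Prop := ¬ Looping g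

/-- `p` is a period of `u`. -/
def HasPeriod (u : List X) (p : ℕ) : Prop :=
  0 < p ∧ ∀ i : ℕ, i + p < u.length → u[i + p]? = u[i]?

/-- The smallest period of `u`. -/
noncomputable def PER (u : List X) : ℕ := sInf {p | HasPeriod u p}

/-- A primitive word: nonempty and not a proper power of a shorter word. -/
def PrimitiveWord (u : List X) : Prop :=
  u ≠ [] ∧ ¬∃ (v : List X) (j : ℕ), 2 ≤ j ∧ v.length < u.length ∧
    u = (List.replicate j v).flatten

/-- `COMP g h` : the set of words whose images under `g` and `h` are prefix-comparable. -/
def COMP (g h : X → List X) : Set (List X) :=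
  {w | ∃ u₁ u₂ : List X, applyM g w ++ u₁ = applyM h w ++ u₂}

/-- `BAL g h`. -/
noncomputable def BAL (g h : X → List X) : ℕ∞ :=
  ⨆ (x : X) (k : ℕ),
    ((((applyM g (iterM g k [x])).length : ℤ) -
      ((applyM h (iterM g k [x])).length : ℤ)).natAbs : ℕ∞)

/-- The set of factors of length `q` of the word `w`. -/
def Fq (q : ℕ) (w : List X) : Set (List X) := {v | v.length = q ∧ v <:+: w}

/-- The set of factors of length `q` of words of `L`. -/
def FqL (q : ℕ) (L : Set (List X)) : Set (List X) := ⋃ w ∈ L, Fq q w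

/-- `A n = ⌊9 n³ √(n log n)⌋`. -/
noncomputable def Abound (n : ℕ) : ℕ := ⌊9 * (n : ℝ)^3 * Real.sqrt (n * Real.log n)⌋₊


section Basic
variable {g : X → List X}

lemma applyM_append (g : X → List X) (u v : List X) :
    applyM g (u ++ v) = applyM g u ++ applyM g v := by
  simp [applyM]

lemma applyM_nil (g : X → List X) : applyM g [] = [] := rfl

lemma applyM_singleton (g : X → List X) (y : X) : applyM g [y] = g y := by
  simp [applyM]

lemma iterM_zero (g : X → List X) (w : List X) : iterM g 0 w = w := rfl

lemma iterM_nil (g : X → List X) (m : ℕ) : iterM g m [] = [] := by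
  induction m with
  | zero => rfl
  | succ m ih => simp [iterM, Function.iterate_succ_apply] at ih ⊢; rw [applyM_nil]; exact ih

lemma iterM_succ (g : X → List X) (m : ℕ) (w : List X) :
    iterM g (m+1) w = iterM g m (applyM g w) := by
  simp [iterM, Function.iterate_succ_apply]

lemma iterM_succ' (g : X → List X) (m : ℕ) (w : List X) :
    iterM g (m+1) w = applyM g (iterM g m w) := by
  simp [iterM, Function.iterate_succ_apply']

lemma iterM_add (g : X → List X) (a b : ℕ) (w : List X) :
    iterM g (a + b) w = iterM g a (iterM g b w) := by
  simp [iterM, Function.iterate_add_apply]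

lemma iterM_append (g : X → List X) (m : ℕ) (u v : List X) :
    iterM g m (u ++ v) = iterM g m u ++ iterM g m v := by
  induction m generalizing u v with
  | zero => rfl
  | succ m ih => rw [iterM_succ, iterM_succ, iterM_succ, applyM_append, ih]

lemma iterM_cons (g : X → List X) (m : ℕ) (c : X) (t : List X) :
    iterM g m (c :: t) = iterM g m [c] ++ iterM g m t := by
  rw [← iterM_append]; rfl

lemma prefix_iterM {u v : List X} (h : u <+: v) (g : X → List X) (m : ℕ) :
    iterM g m u <+: iterM g m v := by
  obtain ⟨t, rfl⟩ := h
  exact ⟨iterM g m t, (iterM_append g m u t).symm⟩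

lemma infix_iterM {u v : List X} (h : u <:+: v) (g : X → List X) (m : ℕ) :
    iterM g m u <:+: iterM g m v := by
  obtain ⟨s, t, rfl⟩ := h
  exact ⟨iterM g m s, iterM g m t, by rw [← iterM_append, ← iterM_append]⟩

lemma iterM_flatMap (g : X → List X) (m : ℕ) (l : List X) :
    iterM g m l = l.flatMap (fun y => iterM g m [y]) := by
  induction l with
  | nil => simp [iterM_nil]
  | cons c t ih => rw [iterM_cons, ih]; simp

lemma singleton_infix_of_mem {a : X} {l : List X} (h : a ∈ l) : [a] <:+: l := by
  obtain ⟨s, t, rfl⟩ := List.append_of_mem h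
  exact ⟨s, t, by simp⟩

lemma growing_ne_nil (hgrow : Growing g) : ∀ y : X, g y ≠ [] := by
  intro y hy
  have h0 : ∀ m : ℕ, iterM g (m+1) [y] = [] := by
    intro m
    rw [iterM_succ, applyM_singleton, hy, iterM_nil]
  have := (hgrow y).eventually_gt_atTop 0
  rw [Filter.eventually_atTop] at this
  obtain ⟨N, hN⟩ := this
  have := hN (N+1) (by omega)
  rw [h0 N] at this
  simp at this

lemma iterM_ne_nil (hne : ∀ y : X, g y ≠ []) {w : List X} (h : w ≠ []) (m : ℕ) :
    iterM g m w ≠ [] := by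
  induction m with
  | zero => exact h
  | succ m ih =>
    rw [iterM_succ']
    rcases List.exists_cons_of_ne_nil ih with ⟨c, t, hct⟩
    rw [hct]
    have : applyM g (c :: t) = g c ++ applyM g t := by simp [applyM]
    rw [this]
    simp [hne c]

lemma length_le_applyM (hne : ∀ y : X, g y ≠ []) (w : List X) :
    w.length ≤ (applyM g w).length := by
  induction w with
  | nil => simp [applyM_nil]
  | cons c t ih =>
    have : applyM g (c :: t) = g c ++ applyM g t := by simp [applyM]
    rw [this, List.length_append, List.length_cons]
    have hc : 1 ≤ (g c).length := List.length_pos_iff.mpr (hne c)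
    omega

lemma length_le_iterM (hne : ∀ y : X, g y ≠ []) (w : List X) (m : ℕ) :
    w.length ≤ (iterM g m w).length := by
  induction m with
  | zero => simp [iterM_zero]
  | succ m ih =>
    rw [iterM_succ']
    exact le_trans ih (length_le_applyM hne _)

lemma length_applyM_le [Fintype X] (g : X → List X) (w : List X) :
    (applyM g w).length ≤ Mg g * w.length := by
  induction w with
  | nil => simp [applyM_nil]
  | cons c t ih =>
    have : applyM g (c :: t) = g c ++ applyM g t := by simp [applyM]
    rw [this, List.length_append, List.length_cons]
    have hc : (g c).length ≤ Mg g := Finset.le_sup (f := fun y => (g y).length) (Finset.mem_univ c)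
    calc (g c).length + (applyM g t).length ≤ Mg g + Mg g * t.length := by omega
    _ = Mg g * (t.length + 1) := by ring

lemma length_iterM_le [Fintype X] (g : X → List X) (w : List X) (m : ℕ) :
    (iterM g m w).length ≤ Mg g ^ m * w.length := by
  induction m with
  | zero => simp [iterM_zero]
  | succ m ih =>
    rw [iterM_succ']
    calc (applyM g (iterM g m w)).length ≤ Mg g * (iterM g m w).length :=
      length_applyM_le g _
    _ ≤ Mg g * (Mg g ^ m * w.length) := Nat.mul_le_mul_left _ ih
    _ = Mg g ^ (m+1) * w.length := by ring

end Basic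

section Periods
variable {g : X → List X}

lemma hasPeriod_length {w : List X} (h : w ≠ []) : HasPeriod w w.length :=
  ⟨List.length_pos_iff.mpr h, fun i hi => by omega⟩

lemma hasPeriod_PER {w : List X} (h : w ≠ []) : HasPeriod w (PER w) :=
  Nat.sInf_mem (⟨w.length, hasPeriod_length h⟩ : {p | HasPeriod w p}.Nonempty)

lemma PER_le_length {w : List X} (h : w ≠ []) : PER w ≤ w.length :=
  Nat.sInf_le (hasPeriod_length h)

lemma prefix_getElem? {l₁ l₂ : List X} (h : l₁ <+: l₂) {i : ℕ} (hi : i < l₁.length) :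
    l₁[i]? = l₂[i]? := by
  obtain ⟨t, rfl⟩ := h
  exact (List.getElem?_append_left hi).symm

lemma infix_getElem? {v w : List X} (h : v <:+: w) {i : ℕ} (hi : i < v.length) :
    ∃ j, w[j + i]? = v[i]? ∧ ∀ i' < v.length, w[j + i']? = v[i']? := by
  obtain ⟨s, t, rfl⟩ := h
  refine ⟨s.length, ?_, ?_⟩
  · rw [List.append_assoc, List.getElem?_append_right (by omega), Nat.add_sub_cancel_left,
      List.getElem?_append_left hi]
  · intro i' hi'
    rw [List.append_assoc, List.getElem?_append_right (by omega), Nat.add_sub_cancel_left,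
      List.getElem?_append_left hi']

lemma HasPeriod.prefix {w v : List X} {p : ℕ} (h : HasPeriod w p) (hv : v <+: w) :
    HasPeriod v p := by
  refine ⟨h.1, fun i hi => ?_⟩
  have hlen : v.length ≤ w.length := hv.length_le
  rw [prefix_getElem? hv hi, prefix_getElem? hv (by omega)]
  exact h.2 i (by omega)

lemma HasPeriod.infix {w v : List X} {p : ℕ} (h : HasPeriod w p) (hv : v <:+: w) :
    HasPeriod v p := by
  obtain ⟨s, t, rfl⟩ := hv
  refine ⟨h.1, fun i hi => ?_⟩
  have h1 : ∀ i' (_ : i' < v.length), (s ++ v ++ t)[s.length + i']? = v[i']? := by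
    intro i' hi'
    rw [List.append_assoc, List.getElem?_append_right (by omega), Nat.add_sub_cancel_left,
      List.getElem?_append_left hi']
  rw [← h1 i (by omega), ← h1 (i+p) hi, ← Nat.add_assoc]
  exact h.2 (s.length + i) (by simp [List.length_append]; omega)

lemma prefix_of_getElem? {l₁ l₂ : List X} (hlen : l₁.length ≤ l₂.length)
    (h : ∀ i < l₁.length, l₁[i]? = l₂[i]?) : l₁ <+: l₂ := by
  rw [List.prefix_iff_eq_take]
  apply List.ext_getElem?
  intro i
  by_cases hi : i < l₁.length
  · rw [h i hi, List.getElem?_take]; simp [hi]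
  · rw [List.getElem?_eq_none (by omega), List.getElem?_eq_none]
    simp only [List.length_take]
    omega

lemma HasPeriod.drop_prefix {w : List X} {p : ℕ} (h : HasPeriod w p) :
    w.drop p <+: w := by
  apply prefix_of_getElem? (by simp)
  intro i hi
  rw [List.getElem?_drop]
  simp only [List.length_drop] at hi
  rw [Nat.add_comm]
  exact h.2 i (by omega)

lemma flatten_replicate_succ (Z : List X) (N : ℕ) :
    (List.replicate (N+1) Z).flatten = Z ++ (List.replicate N Z).flatten := by
  simp [List.replicate_succ]

lemma flatten_replicate_succ' (Z : List X) (N : ℕ) :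
    (List.replicate (N+1) Z).flatten = (List.replicate N Z).flatten ++ Z := by
  rw [List.replicate_succ']; simp

lemma length_flatten_replicate (Z : List X) (N : ℕ) :
    (List.replicate N Z).flatten.length = N * Z.length := by
  simp [List.length_flatten]

lemma flatten_replicate_mono (Z : List X) {a b : ℕ} (h : a ≤ b) :
    (List.replicate a Z).flatten <+: (List.replicate b Z).flatten := by
  refine ⟨(List.replicate (b - a) Z).flatten, ?_⟩
  rw [← List.flatten_append, ← List.replicate_add]
  congr 2
  omega

lemma hasPeriod_flatten_replicate {Z : List X} (hZ : Z ≠ []) (N : ℕ) :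
    HasPeriod (List.replicate N Z).flatten Z.length := by
  refine ⟨List.length_pos_iff.mpr hZ, fun i hi => ?_⟩
  rw [length_flatten_replicate] at hi
  have hN : N ≠ 0 := by
    intro h; subst h; simp at hi
  obtain ⟨N', rfl⟩ := Nat.exists_eq_succ_of_ne_zero hN
  have h1 : (List.replicate (N'+1) Z).flatten[i + Z.length]? =
      (List.replicate N' Z).flatten[i]? := by
    rw [flatten_replicate_succ, List.getElem?_append_right (by omega)]
    congr 1
    omega
  have h2 : (List.replicate (N'+1) Z).flatten[i]? = (List.replicate N' Z).flatten[i]? := by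
    rw [flatten_replicate_succ', List.getElem?_append_left]
    rw [length_flatten_replicate]
    rw [Nat.succ_mul] at hi
    omega
  rw [h1, h2]

lemma take_drop_eq_take {w : List X} {p : ℕ} (h : HasPeriod w p) (hp : p ≤ (w.drop p).length) :
    (w.drop p).take p = w.take p := by
  apply List.ext_getElem?
  intro i
  by_cases hi : i < p
  · rw [List.getElem?_take, List.getElem?_take]
    simp only [hi, if_true]
    rw [List.getElem?_drop, Nat.add_comm]
    simp only [List.length_drop] at hp
    exact h.2 i (by omega)
  · rw [List.getElem?_eq_none, List.getElem?_eq_none] <;> simp only [List.length_take] <;> omega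

lemma prefix_append_left {u v w : List X} (h : u <+: v) : w ++ u <+: w ++ v := by
  obtain ⟨t, rfl⟩ := h
  exact ⟨t, by rw [List.append_assoc]⟩

/-- A word with period `p` is a prefix of a power of its length-`p` prefix. -/
lemma prefix_pow_of_hasPeriod {w : List X} {p : ℕ} (h : HasPeriod w p) :
    w <+: (List.replicate w.length (w.take p)).flatten := by
  generalize hn : w.length = N
  induction N using Nat.strong_induction_on generalizing w with
  | _ N ih =>
  have hp1 : 0 < p := h.1
  by_cases hw : w.length ≤ p
  · rcases Nat.eq_zero_or_pos N with h0 | h0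
    · have : w = [] := by
        subst hn; exact List.length_eq_zero_iff.mp h0
      simp [this]
    · have : w.take p = w := List.take_of_length_le hw
      rw [this]
      have hNe : N - 1 + 1 = N := by omega
      calc w <+: w ++ (List.replicate (N-1) w).flatten := ⟨_, rfl⟩
      _ = (List.replicate N w).flatten := by
          rw [← flatten_replicate_succ, hNe]
  · push_neg at hw
    have hdrop := h.drop_prefix
    have hN2 : 2 ≤ N := by rw [← hn]; omega
    by_cases hsh : (w.drop p).length < p
    · have hfit : w.drop p <+: w.take p := by
        rw [List.prefix_take_iff]
        exact ⟨hdrop, by omega⟩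
      calc w = w.take p ++ w.drop p := (List.take_append_drop p w).symm
      _ <+: w.take p ++ w.take p := prefix_append_left hfit
      _ = (List.replicate 2 (w.take p)).flatten := by simp [List.replicate_succ]
      _ <+: (List.replicate N (w.take p)).flatten := flatten_replicate_mono _ hN2
    · push_neg at hsh
      have hperdrop : HasPeriod (w.drop p) p := h.prefix hdrop
      have hlt : (w.drop p).length < N := by
        simp only [List.length_drop]; omega
      have htake : (w.drop p).take p = w.take p := take_drop_eq_take h hsh
      have ihd := ih (w.drop p).length hlt hperdrop rfl
      rw [htake] at ihd
      calc w = w.take p ++ w.drop p := (List.take_append_drop p w).symm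
      _ <+: w.take p ++ (List.replicate (w.drop p).length (w.take p)).flatten :=
          prefix_append_left ihd
      _ = (List.replicate ((w.drop p).length + 1) (w.take p)).flatten :=
          (flatten_replicate_succ _ _).symm
      _ <+: (List.replicate N (w.take p)).flatten := by
          apply flatten_replicate_mono
          omega

lemma iterM_flatten_replicate (g : X → List X) (k N : ℕ) (Z : List X) :
    iterM g k (List.replicate N Z).flatten = (List.replicate N (iterM g k Z)).flatten := by
  induction N with
  | zero => simp [iterM_nil]
  | succ N ih => rw [flatten_replicate_succ, flatten_replicate_succ, iterM_append, ih]

/-- Key transfer: the image under `iterM g k` of a `p`-periodic word has period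
`|iterM g k (w.take p)|`. -/
lemma hasPeriod_iterM (hne : ∀ y : X, g y ≠ []) {w : List X} {p : ℕ} (h : HasPeriod w p)
    (hwnil : w ≠ []) (k : ℕ) :
    HasPeriod (iterM g k w) (iterM g k (w.take p)).length := by
  have htne : w.take p ≠ [] := by
    intro hc
    have := congrArg List.length hc
    simp only [List.length_take, List.length_nil] at this
    have := h.1
    have : w.length = 0 := by omega
    exact hwnil (List.length_eq_zero_iff.mp this)
  have hZne : iterM g k (w.take p) ≠ [] := iterM_ne_nil hne htne k
  have h1 : iterM g k w <+: (List.replicate w.length (iterM g k (w.take p))).flatten := by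
    have h2 := prefix_iterM (prefix_pow_of_hasPeriod h) g k
    rwa [iterM_flatten_replicate] at h2
  exact (hasPeriod_flatten_replicate hZne _).prefix h1

end Periods

section Merge

/-- Interior merge: if `W = L ++ v ++ R` has period `q` and the factor `v` has period `p`
with `q + p ≤ |v|`, then `W` has period `p`. -/
lemma merge_period {L v R : List X} {p q : ℕ}
    (hW : HasPeriod (L ++ (v ++ R)) q) (hv : HasPeriod v p)
    (hlen : q + p ≤ v.length) : HasPeriod (L ++ (v ++ R)) p := by
  set W := L ++ (v ++ R) with hWdef
  have hWlen : W.length = L.length + (v.length + R.length) := by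
    simp [hWdef]
  have q1 : 0 < q := hW.1
  have p1 : 0 < p := hv.1
  have hq := hW.2
  have hp := hv.2
  have hwin : ∀ t, t < v.length → W[L.length + t]? = v[t]? := by
    intro t ht
    rw [hWdef, List.getElem?_append_right (by omega), Nat.add_sub_cancel_left,
      List.getElem?_append_left ht]
  have SubA : ∀ i, L.length ≤ i → i + p < W.length → W[i+p]? = W[i]? := by
    intro i
    induction i using Nat.strong_induction_on with
    | _ i ih =>
    intro hLi hip
    by_cases hiq : i < L.length + q
    · have h1 : W[i]? = v[i - L.length]? := by
        have := hwin (i - L.length) (by omega)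
        rw [← this]; congr 1; omega
      have h2 : W[i+p]? = v[i - L.length + p]? := by
        have := hwin (i - L.length + p) (by omega)
        rw [← this]; congr 1; omega
      rw [h1, h2, hp _ (by omega)]
    · have e1 : W[i+p]? = W[i+p-q]? := by
        have := hq (i + p - q) (by omega)
        rw [← this]; congr 1; omega
      have e2 : W[i]? = W[i-q]? := by
        have := hq (i - q) (by omega)
        rw [← this]; congr 1; omega
      rw [e1, e2]
      have := ih (i - q) (by omega) (by omega) (by omega)
      rw [← this]; congr 1; omega
  have SubB : ∀ m i, L.length ≤ i + m → i + p < W.length → W[i+p]? = W[i]? := by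
    intro m
    induction m with
    | zero => intro i h hip; exact SubA i (by omega) hip
    | succ m ih =>
      intro i h hip
      by_cases hcase : L.length ≤ i
      · exact SubA i hcase hip
      · push_neg at hcase
        have e1 : W[i]? = W[i+q]? := (hq i (by omega)).symm
        have e2 : W[i+p]? = W[i+p+q]? := (hq (i+p) (by omega)).symm
        have step := ih (i + q) (by omega) (by omega)
        rw [e1, e2]
        have h3 : i + p + q = (i + q) + p := by omega
        rw [h3, step]
  exact ⟨p1, fun i hip => SubB L.length i (by omega) hip⟩

end Merge

section LoopingConstruction

lemma headI_append [Inhabited X] {u v : List X} (h : u ≠ []) : (u ++ v).headI = u.headI := by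
  cases u with
  | nil => simp at h
  | cons c t => rfl

lemma headI_prefix [Inhabited X] {l : List X} (h : l ≠ []) : [l.headI] <+: l := by
  cases l with
  | nil => simp at h
  | cons c t => exact ⟨t, rfl⟩

lemma getElem_of_prefix {l₁ l₂ : List X} (h : l₁ <+: l₂) {i : ℕ} (h1 : i < l₁.length)
    (h2 : i < l₂.length) : l₁[i]'h1 = l₂[i]'h2 := by
  have := prefix_getElem? h h1
  rw [List.getElem?_eq_getElem h1, List.getElem?_eq_getElem h2] at this
  exact Option.some.inj this

lemma applyM_powM (g : X → List X) (k : ℕ) (w : List X) :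
    applyM (powM g k) w = iterM g k w := by
  induction w with
  | nil => simp [applyM_nil, iterM_nil]
  | cons c t ih =>
    have h1 : applyM (powM g k) (c :: t) = powM g k c ++ applyM (powM g k) t := by
      simp [applyM]
    rw [h1, ih, iterM_cons]
    rfl

lemma iterM_powM (g : X → List X) (k : ℕ) (w : List X) (i : ℕ) :
    iterM (powM g k) i w = iterM g (k * i) w := by
  induction i with
  | zero => simp [iterM_zero]
  | succ i ih =>
    rw [iterM_succ', ih, applyM_powM, ← iterM_add]
    congr 1
    ring

lemma looping_of_fixed_word [Fintype X] {g : X → List X} (hgrow : Growing g)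
    {V : List X} {k p : ℕ} (hk : 0 < k) (hp : 0 < p)
    (hVne : V ≠ [])
    (hVk : V <:+: iterM g k V)
    (hVper : HasPeriod V p)
    (hVlen : p * (Mg g ^ k + 1) ≤ V.length) : Looping g := by
  letI : Inhabited X := ⟨V.head hVne⟩
  have hne : ∀ y : X, g y ≠ [] := growing_ne_nil hgrow
  have hM1 : 1 ≤ Mg g := by
    have h1 : 1 ≤ (g (V.head hVne)).length := List.length_pos_iff.mpr (hne _)
    exact le_trans h1 (Finset.le_sup (f := fun y => (g y).length) (Finset.mem_univ _))
  have hMgk1 : 1 ≤ Mg g ^ k := Nat.one_le_pow _ _ hM1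
  have hpV : p ≤ V.length := le_trans (Nat.le_mul_of_pos_right p (by omega)) hVlen
  -- the tower of words
  set W : ℕ → List X := fun m => iterM g (k*m) V with hWdef
  have hW0 : W 0 = V := by simp [hWdef, iterM_zero]
  have hWsucc : ∀ m, W (m+1) = iterM g k (W m) := by
    intro m
    show iterM g (k*(m+1)) V = iterM g k (iterM g (k*m) V)
    rw [← iterM_add]
    congr 1
    ring
  have hWne : ∀ m, W m ≠ [] := fun m => iterM_ne_nil hne hVne _
  have hWlenV : ∀ m, V.length ≤ (W m).length := by
    intro m
    induction m with
    | zero => rw [hW0]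
    | succ m ih =>
      rw [hWsucc]
      exact le_trans ih (length_le_iterM hne _ k)
  have hWinf : ∀ m, W m <:+: W (m+1) := by
    intro m
    have h1 := infix_iterM hVk g (k*m)
    rw [← iterM_add] at h1
    have h2 : k * m + k = k * (m+1) := by ring
    rw [h2] at h1
    exact h1
  have hWper : ∀ m, HasPeriod (W m) p := by
    intro m
    induction m with
    | zero => rw [hW0]; exact hVper
    | succ m ih =>
      have hzlen : ((W m).take p).length = p := by
        rw [List.length_take]
        exact min_eq_left (le_trans hpV (hWlenV m))
      have hq : HasPeriod (W (m+1)) (iterM g k ((W m).take p)).length := by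
        rw [hWsucc]
        exact hasPeriod_iterM hne ih (hWne m) k
      have hqle : (iterM g k ((W m).take p)).length ≤ Mg g ^ k * p := by
        calc (iterM g k ((W m).take p)).length ≤ Mg g ^ k * ((W m).take p).length :=
          length_iterM_le g _ k
        _ = Mg g ^ k * p := by rw [hzlen]
      obtain ⟨L, R, hLR⟩ := hWinf m
      have hLR' : W (m+1) = L ++ (W m ++ R) := by rw [← hLR, List.append_assoc]
      rw [hLR'] at hq ⊢
      apply merge_period hq ih
      calc (iterM g k ((W m).take p)).length + p ≤ Mg g ^ k * p + p := by omega
      _ = p * (Mg g ^ k + 1) := by ring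
      _ ≤ V.length := hVlen
      _ ≤ (W m).length := hWlenV m
  -- heads and the cyclic letter
  set ψ : X → X := fun y => (iterM g k [y]).headI with hψdef
  have hhead : ∀ v : List X, v ≠ [] → (iterM g k v).headI = ψ v.headI := by
    intro v hv
    cases v with
    | nil => simp at hv
    | cons c t =>
      rw [iterM_cons, headI_append (iterM_ne_nil hne (by simp) k)]
      rfl
  have hψiter : ∀ (y : X) (m : ℕ), (iterM g (k*m) [y]).headI = ψ^[m] y := by
    intro y m
    induction m with
    | zero => simp [iterM_zero]
    | succ m ih =>
      have h1 : k * (m+1) = k + k * m := by ring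
      rw [h1, iterM_add, hhead _ (iterM_ne_nil hne (by simp) _), ih,
        Function.iterate_succ_apply']
  have hWhead : ∀ m, (W m).headI = ψ^[m] V.headI := by
    intro m
    induction m with
    | zero => rw [hW0]; rfl
    | succ m ih => rw [hWsucc, hhead _ (hWne m), ih, Function.iterate_succ_apply']
  -- pigeonhole on the head orbit
  obtain ⟨m₀', m₁', hne01, heq01⟩ :=
    Finite.exists_ne_map_eq_of_infinite (fun m : ℕ => ψ^[m] V.headI)
  obtain ⟨m₀, κ, hκ, hfixeq⟩ : ∃ m₀ κ, 0 < κ ∧ ψ^[m₀ + κ] V.headI = ψ^[m₀] V.headI := by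
    rcases hne01.lt_or_gt with hlt | hlt
    · exact ⟨m₀', m₁' - m₀', by omega,
        by rw [show m₀' + (m₁' - m₀') = m₁' by omega]; exact heq01.symm⟩
    · exact ⟨m₁', m₀' - m₁', by omega,
        by rw [show m₁' + (m₀' - m₁') = m₀' by omega]; exact heq01⟩
  set a : X := ψ^[m₀] V.headI with hadef
  have hfix : ψ^[κ] a = a := by
    rw [hadef, ← Function.iterate_add_apply, Nat.add_comm]
    exact hfixeq
  set k' := k * κ with hk'def
  have hk' : 0 < k' := Nat.mul_pos hk hκ
  have hdd : (iterM g k' [a]).headI = a := by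
    rw [hk'def, hψiter, hfix]
  have haP : [a] <+: iterM g k' [a] := by
    have h1 := headI_prefix (l := iterM g k' [a]) (iterM_ne_nil hne (by simp) _)
    rwa [hdd] at h1
  set P : ℕ → List X := fun j => iterM g (k'*j) [a] with hPdef
  have hPne : ∀ j, P j ≠ [] := fun j => iterM_ne_nil hne (by simp) _
  have hPsucc : ∀ j, P j <+: P (j+1) := by
    intro j
    have h1 := prefix_iterM haP g (k'*j)
    rw [← iterM_add] at h1
    have h2 : k' * j + k' = k' * (j+1) := by ring
    rw [h2] at h1
    exact h1
  have hPmono : ∀ j j', j ≤ j' → P j <+: P j' := by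
    intro j j' hj
    induction j' with
    | zero =>
      have hj0 : j = 0 := by omega
      subst hj0; exact List.prefix_refl _
    | succ j' ih =>
      rcases Nat.lt_or_ge j (j'+1) with h | h
      · exact (ih (by omega)).trans (hPsucc j')
      · have hj1 : j = j' + 1 := by omega
        subst hj1; exact List.prefix_refl _
  have haW : [a] <+: W m₀ := by
    have h1 := headI_prefix (hWne m₀)
    rw [hWhead m₀] at h1
    exact h1
  have hPW : ∀ j, P j <+: W (m₀ + κ * j) := by
    intro j
    have h1 := prefix_iterM haW g (k'*j)
    have h2 : iterM g (k'*j) (W m₀) = W (m₀ + κ * j) := by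
      show iterM g (k'*j) (iterM g (k*m₀) V) = iterM g (k*(m₀ + κ*j)) V
      rw [← iterM_add]
      congr 1
      rw [hk'def]
      ring
    rwa [h2] at h1
  have hPper : ∀ j, HasPeriod (P j) p := fun j => (hWper _).prefix (hPW j)
  have hPlen : Tendsto (fun j => (P j).length) atTop atTop := by
    have h1 : Tendsto (fun j : ℕ => k' * j) atTop atTop :=
      tendsto_atTop_mono (fun j => Nat.le_mul_of_pos_left j hk') tendsto_id
    exact (hgrow a).comp h1
  have hJ : ∀ i : ℕ, ∃ j, i < (P j).length := fun i => (hPlen.eventually_gt_atTop i).exists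
  choose Jf hJf using hJ
  set s : ℕ → X := fun i => (P (Jf i))[i]'(hJf i) with hsdef
  have hs : ∀ j i (h : i < (P j).length), (P j)[i]'h = s i := by
    intro j i h
    rcases le_total j (Jf i) with hle | hle
    · exact getElem_of_prefix (hPmono _ _ hle) h (hJf i)
    · exact (getElem_of_prefix (hPmono _ _ hle) (hJf i) h).symm
  have homega : IsOmega (powM g k') a s := by
    refine ⟨⟨haP, ?_⟩, ?_⟩
    · have hfun : (fun i => (iterM (powM g k') i [a]).length) = fun i => (P i).length := by
        funext i
        rw [iterM_powM g k' [a] i]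
      rw [hfun]
      exact hPlen
    · intro i
      have hfun : iterM (powM g k') i [a] = P i := iterM_powM g k' [a] i
      rw [hfun]
      intro t ht
      exact hs i t ht
  have hup : p < (P (Jf p)).length := hJf p
  set u : List X := (P (Jf p)).take p with hudef
  have hulen : u.length = p := by
    rw [hudef, List.length_take]
    omega
  have hune : u ≠ [] := by
    intro hc
    rw [hc] at hulen
    simp at hulen
    omega
  have hsp : ∀ i, s (i + p) = s i := by
    intro i
    have h1 := hJf (i + p)
    have h2 : i < (P (Jf (i+p))).length := by omega
    rw [← hs _ _ h1, ← hs _ _ h2]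
    have h3 := (hPper (Jf (i+p))).2 i h1
    rw [List.getElem?_eq_getElem h1, List.getElem?_eq_getElem h2] at h3
    exact Option.some.inj h3
  have hbase : ∀ i, i < p → u[i]? = some (s i) := by
    intro i h
    have h2 : i < (P (Jf p)).length := by omega
    rw [hudef, List.getElem?_take]
    simp only [h, if_true]
    rw [List.getElem?_eq_getElem h2, hs _ _ h2]
  have hclaim : ∀ i : ℕ, u[i % p]? = some (s i) := by
    intro i
    induction i using Nat.strong_induction_on with
    | _ i ih =>
    rcases Nat.lt_or_ge i p with hlt | hge
    · rw [Nat.mod_eq_of_lt hlt]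
      exact hbase i hlt
    · rw [Nat.mod_eq_sub_mod hge]
      have h1 := ih (i - p) (by omega)
      rw [h1]
      congr 1
      have h2 := hsp (i - p)
      rw [show i - p + p = i by omega] at h2
      exact h2.symm
  have hmod : ∀ (i : ℕ) (h : i % u.length < u.length), s i = u[i % u.length]'h := by
    intro i h
    have h1 := hclaim i
    have h2 : i % u.length = i % p := by rw [hulen]
    rw [← h2] at h1
    rw [List.getElem?_eq_getElem h] at h1
    exact (Option.some.inj h1).symm
  exact ⟨k', hk', a, u, s, homega, ⟨hune, hmod⟩⟩

end LoopingConstruction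

section Main

lemma exists_max_mem (l : List X) (f : X → ℕ) (hl : l ≠ []) :
    ∃ m ∈ l, ∀ a ∈ l, f a ≤ f m := by
  induction l with
  | nil => simp at hl
  | cons c t ih =>
    rcases eq_or_ne t [] with rfl | ht
    · exact ⟨c, by simp, by simp⟩
    · obtain ⟨m, hm, hmax⟩ := ih ht
      rcases le_total (f m) (f c) with h | h
      · refine ⟨c, by simp, ?_⟩
        intro a ha
        rcases List.mem_cons.mp ha with rfl | ha
        · exact le_refl _
        · exact le_trans (hmax a ha) h
      · refine ⟨m, by simp [hm], ?_⟩
        intro a ha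
        rcases List.mem_cons.mp ha with rfl | ha
        · exact h
        · exact hmax a ha

lemma length_iterM_le_of_bound {g : X → List X} (m : ℕ) (l : List X) (B : ℕ)
    (h : ∀ a ∈ l, (iterM g m [a]).length ≤ B) :
    (iterM g m l).length ≤ l.length * B := by
  rw [iterM_flatMap, List.length_flatMap]
  calc (l.map fun y => (iterM g m [y]).length).sum ≤
      (l.map fun y => (iterM g m [y]).length).length * B := by
        apply List.sum_le_card_nsmul
        intro x hx
        simp only [List.mem_map] at hx
        obtain ⟨y, hy, rfl⟩ := hx
        exact h y hy
  _ = l.length * B := by rw [List.length_map]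

theorem loopFree_per_lower_bound' {X : Type*} [Fintype X]
    (n : ℕ) (hn : n = Fintype.card X)
    (g : X → List X) (hgrow : Growing g) (hlf : LoopFree g) :
    ∀ (x : X) (d : ℕ), 0 < d →
      ((iterM g d [x]).length : ℝ) / (2 * (Mg g : ℝ) ^ n) ≤ (PER (iterM g d [x]) : ℝ) := by
  intro x d hd
  by_contra hcon
  push_neg at hcon
  set w : List X := iterM g d [x] with hwdef
  have hne : ∀ y : X, g y ≠ [] := growing_ne_nil hgrow
  have hwne : w ≠ [] := iterM_ne_nil hne (by simp) d
  set p : ℕ := PER w with hpdef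
  have hper : HasPeriod w p := hasPeriod_PER hwne
  have hp1 : 0 < p := hper.1
  have hM1 : 1 ≤ Mg g := by
    have h1 : 1 ≤ (g x).length := List.length_pos_iff.mpr (hne x)
    exact le_trans h1 (Finset.le_sup (f := fun y => (g y).length) (Finset.mem_univ x))
  -- translate the real inequality to ℕ
  have hMpos : (0:ℝ) < 2 * (Mg g : ℝ) ^ n := by positivity
  have hnat : 2 * p * Mg g ^ n < w.length := by
    have h1 : (p : ℝ) * (2 * (Mg g : ℝ) ^ n) < (w.length : ℝ) := (lt_div_iff₀ hMpos).mp hcon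
    have h2 : ((2 * p * Mg g ^ n : ℕ) : ℝ) < ((w.length : ℕ) : ℝ) := by
      push_cast
      nlinarith [h1]
    exact_mod_cast h2
  -- n ≤ d
  have hwle : w.length ≤ Mg g ^ d := by
    have h1 := length_iterM_le g [x] d
    simpa using h1
  have hnd : n ≤ d := by
    by_contra hcd
    push_neg at hcd
    have h1 : Mg g ^ d ≤ Mg g ^ n := Nat.pow_le_pow_right hM1 (by omega)
    nlinarith [hnat, hwle, Nat.one_le_pow n (Mg g) hM1]
  -- the maximal-tile chain
  have hstep : ∀ (b : X) (j : ℕ), ∃ b' : X, b' ∈ g b ∧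
      ∀ a ∈ g b, (iterM g j [a]).length ≤ (iterM g j [b']).length := by
    intro b j
    obtain ⟨m, hm, hmax⟩ := exists_max_mem (g b) (fun y => (iterM g j [y]).length) (hne b)
    exact ⟨m, hm, hmax⟩
  choose F hF1 hF2 using hstep
  set z : ℕ → X := fun j => Nat.rec x (fun j b => F b (d - (j+1))) j with hzdef
  have hz0 : z 0 = x := rfl
  have hzsucc : ∀ j, z (j+1) = F (z j) (d - (j+1)) := fun j => rfl
  have hzmem : ∀ j, z (j+1) ∈ g (z j) := by
    intro j
    rw [hzsucc]
    exact hF1 (z j) (d - (j+1))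
  have hmemx : ∀ j, z j ∈ iterM g j [x] := by
    intro j
    induction j with
    | zero => simp [hz0, iterM_zero]
    | succ j ih =>
      rw [iterM_succ']
      exact List.mem_flatMap.mpr ⟨z j, ih, hzmem j⟩
  have hchain : ∀ j t, z (j + t) ∈ iterM g t [z j] := by
    intro j t
    induction t with
    | zero => simp [iterM_zero]
    | succ t ih =>
      rw [iterM_succ']
      have h1 : z (j + (t+1)) = z ((j + t) + 1) := by congr 1
      rw [h1]
      exact List.mem_flatMap.mpr ⟨z (j + t), ih, hzmem (j + t)⟩
  have hbound : ∀ j, j ≤ d → w.length ≤ Mg g ^ j * (iterM g (d - j) [z j]).length := by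
    intro j hj
    induction j with
    | zero => simp [hz0, hwdef, iterM_zero]
    | succ j ih =>
      have hij := ih (by omega)
      have h1 : iterM g (d - j) [z j] = iterM g (d - (j+1)) (applyM g [z j]) := by
        rw [← iterM_succ]
        congr 1
        omega
      have h2 : (iterM g (d - (j+1)) (g (z j))).length ≤
          Mg g * (iterM g (d - (j+1)) [z (j+1)]).length := by
        have h3 := length_iterM_le_of_bound (g := g) (d - (j+1)) (g (z j))
          ((iterM g (d - (j+1)) [z (j+1)]).length) ?_
        · calc (iterM g (d - (j+1)) (g (z j))).length ≤
              (g (z j)).length * (iterM g (d - (j+1)) [z (j+1)]).length := h3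
          _ ≤ Mg g * (iterM g (d - (j+1)) [z (j+1)]).length := by
              apply Nat.mul_le_mul_right
              exact Finset.le_sup (f := fun y => (g y).length) (Finset.mem_univ _)
        · intro a ha
          rw [hzsucc]
          exact hF2 (z j) (d - (j+1)) a ha
      rw [applyM_singleton] at h1
      calc w.length ≤ Mg g ^ j * (iterM g (d - j) [z j]).length := hij
      _ = Mg g ^ j * (iterM g (d - (j+1)) (g (z j))).length := by rw [h1]
      _ ≤ Mg g ^ j * (Mg g * (iterM g (d - (j+1)) [z (j+1)]).length) :=
          Nat.mul_le_mul_left _ h2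
      _ = Mg g ^ (j+1) * (iterM g (d - (j+1)) [z (j+1)]).length := by ring
  -- pigeonhole
  obtain ⟨α', β', hab, heqz⟩ := Fintype.exists_ne_map_eq_of_card_lt
    (fun j : Fin (n+1) => z j) (by rw [← hn, Fintype.card_fin]; omega)
  obtain ⟨A, B, hAB, hBn, hzAB⟩ : ∃ A B : ℕ, A < B ∧ B ≤ n ∧ z A = z B := by
    rcases Fin.lt_or_lt_of_ne hab with h | h
    · exact ⟨α', β', h, by omega, heqz⟩
    · exact ⟨β', α', h, by omega, heqz.symm⟩
  set k := B - A with hkdef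
  have hk1 : 0 < k := by omega
  set b := z A with hbdef
  have hbk : b ∈ iterM g k [b] := by
    have h1 := hchain A k
    rw [show A + k = B by omega] at h1
    rw [← hzAB] at h1
    exact h1
  set V : List X := iterM g (d - A) [b] with hVdef
  have hVne : V ≠ [] := iterM_ne_nil hne (by simp) _
  have hVw : V <:+: w := by
    have h1 := infix_iterM (singleton_infix_of_mem (hmemx A)) g (d - A)
    rw [← iterM_add] at h1
    rw [show d - A + A = d by omega] at h1
    exact h1
  have hVk : V <:+: iterM g k V := by
    have h1 := infix_iterM (singleton_infix_of_mem hbk) g (d - A)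
    rw [← iterM_add] at h1
    have h2 : iterM g (d - A + k) [b] = iterM g k V := by
      rw [hVdef, ← iterM_add]
      congr 1
      omega
    rwa [h2] at h1
  have hVper : HasPeriod V p := hper.infix hVw
  have hVlen : p * (Mg g ^ k + 1) ≤ V.length := by
    by_contra hc
    push_neg at hc
    have h1 : w.length ≤ Mg g ^ A * V.length := hbound A (by omega)
    have h2 : Mg g ^ A * V.length < Mg g ^ A * (p * (Mg g ^ k + 1)) := by
      have hpos : 0 < Mg g ^ A := Nat.pow_pos (by omega)
      exact (mul_lt_mul_iff_right₀ hpos).mpr hc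
    have h3 : Mg g ^ A * (p * (Mg g ^ k + 1)) = p * (Mg g ^ (A + k) + Mg g ^ A) := by
      rw [pow_add]
      ring
    have h4 : Mg g ^ (A + k) ≤ Mg g ^ n := Nat.pow_le_pow_right hM1 (by omega)
    have h5 : Mg g ^ A ≤ Mg g ^ n := Nat.pow_le_pow_right hM1 (by omega)
    have h6 : p * (Mg g ^ (A + k) + Mg g ^ A) ≤ 2 * p * Mg g ^ n := by nlinarith
    omega
  exact hlf (looping_of_fixed_word hgrow hk1 hp1 hVne hVk hVper hVlen)

end Main


/-- If `g` is growing and loop-free on an alphabet with `n` letters,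
then `PER(g^d(x)) ≥ |g^d(x)| / (2 M_g^n)` for every letter `x` and every `d ≥ 1`. -/
theorem loopFree_per_lower_bound {X : Type*} [Fintype X]
    (n : ℕ) (hn : n = Fintype.card X)
    (g : X → List X) (hgrow : Growing g) (hlf : LoopFree g) :
    ∀ (x : X) (d : ℕ), 0 < d →
      ((iterM g d [x]).length : ℝ) / (2 * (Mg g : ℝ) ^ n) ≤ (PER (iterM g d [x]) : ℝ) :=
  loopFree_per_lower_bound' n hn g hgrow hlf
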